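/- arXiv:0705.0670 — 2 statements merged into one kernel-verified Lean document; each statement's English description precedes it below -/
import Mathlib

section
/- If {X_n} is an amenable (Følner) exhaustive sequence for G consisting of symmetric sets (X_n = X_n^{-1}), then the Besicovitch pseudodistance d_{B,{X_n}} on Q^G is invariant under translations c ↦ c^g for every g ∈ G. -/
open Filter Pointwise

noncomputable def hamDist {G Q : Type*} (U : Set G) (c₁ c₂ : G → Q) : ℕ :=
  {x ∈ U | c₁ x ≠ c₂ x}.ncard

noncomputable def besDist {G Q : Type*} (X : ℕ → Finset G) (c₁ c₂ : G → Q) : ℝ :=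
  limsup (fun n => (hamDist (X n : Set G) c₁ c₂ : ℝ) / (X n).card) atTop

def IsExhaustive {G : Type*} (X : ℕ → Finset G) : Prop :=
  (∀ n, X n ⊆ X (n + 1)) ∧ ∀ g : G, ∃ n, g ∈ X n

def IsFolner {G : Type*} [Group G] [DecidableEq G] (X : ℕ → Finset G) : Prop :=
  IsExhaustive X ∧ ∀ E : Finset G,
    Tendsto (fun n => (((X n * E⁻¹) \ X n).card : ℝ) / (X n).card) atTop (nhds 0)

lemma hamDist_coe {G Q : Type*} (s : Finset G) (c₁ c₂ : G → Q)
    [DecidablePred fun x => c₁ x ≠ c₂ x] :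
    hamDist (s : Set G) c₁ c₂ = (s.filter (fun x => c₁ x ≠ c₂ x)).card := by
  rw [hamDist, ← Set.ncard_coe_finset, Finset.coe_filter]
  rfl

/-- Key limsup comparison lemma. -/
lemma limsup_le_of_le_add_tendsto {a b e : ℕ → ℝ} (ha0 : ∀ n, 0 ≤ a n)
    (hb0 : ∀ n, 0 ≤ b n) (hb1 : ∀ n, b n ≤ 1)
    (hab : ∀ n, a n ≤ b n + e n) (he : Tendsto e atTop (nhds 0)) :
    limsup a atTop ≤ limsup b atTop := by
  have hbB : IsBoundedUnder (· ≤ ·) atTop b := isBoundedUnder_of ⟨1, hb1⟩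
  have hbG : IsBoundedUnder (· ≥ ·) atTop b := isBoundedUnder_of ⟨0, hb0⟩
  have hbC : IsCoboundedUnder (· ≤ ·) atTop b := hbG.isCoboundedUnder_le
  have heB : IsBoundedUnder (· ≤ ·) atTop e := he.isBoundedUnder_le
  have heC : IsCoboundedUnder (· ≤ ·) atTop e :=
    IsBoundedUnder.isCoboundedUnder_le he.isBoundedUnder_ge
  have h1 : limsup a atTop ≤ limsup (fun n => b n + e n) atTop := by
    refine limsup_le_limsup (Eventually.of_forall hab) ?_ ?_
    · exact IsBoundedUnder.isCoboundedUnder_le (isBoundedUnder_of ⟨0, ha0⟩)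
    · obtain ⟨M, hM⟩ := heB
      refine ⟨1 + M, ?_⟩
      rw [eventually_map] at hM ⊢
      filter_upwards [hM] with n hn
      exact add_le_add (hb1 n) hn
  refine h1.trans ?_
  have h2 : limsup (fun n => b n + e n) atTop ≤ limsup b atTop + limsup e atTop :=
    limsup_add_le hbG hbB heC heB
  rwa [he.limsup_eq, add_zero] at h2

lemma filter_card_le {G : Type*} [DecidableEq G] (s t : Finset G)
    (P : G → Prop) [DecidablePred P] :
    (t.filter P).card ≤ (s.filter P).card + (t \ s).card := by
  refine le_trans (Finset.card_le_card (fun x hx => ?_)) (Finset.card_union_le _ _)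
  simp only [Finset.mem_filter, Finset.mem_union, Finset.mem_sdiff] at hx ⊢
  by_cases h : x ∈ s
  · exact Or.inl ⟨h, hx.2⟩
  · exact Or.inr ⟨hx.1, h⟩

/-- If an amenable exhaustive sequence consists of symmetric sets, then the
Besicovitch pseudodistance is translation invariant. -/
theorem besicovitch_translation_invariant_of_symmetric_folner
    {G Q : Type*} [Group G] [DecidableEq G] [Fintype Q] (hQ : 2 ≤ Fintype.card Q)
    (X : ℕ → Finset G) (hX : IsFolner X) (hsym : ∀ n, X n = (X n)⁻¹) :
    ∀ (g : G) (c₁ c₂ : G → Q),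
      besDist X (fun h => c₁ (g * h)) (fun h => c₂ (g * h)) = besDist X c₁ c₂ := by
  classical
  intro g c₁ c₂
  have hmem : ∀ n (x : G), x ∈ X n ↔ x⁻¹ ∈ X n := by
    intro n x
    conv_lhs => rw [hsym n]
    simp [Finset.mem_inv']
  -- translated ham equals ham over translated set
  have hham : ∀ n, hamDist (X n : Set G) (fun h => c₁ (g * h)) (fun h => c₂ (g * h))
      = ((g • X n).filter (fun x => c₁ x ≠ c₂ x)).card := by
    intro n
    rw [hamDist_coe]
    rw [show (g • X n).filter (fun x => c₁ x ≠ c₂ x) = Finset.image (fun x => g * x)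
        ((X n).filter (fun x => c₁ (g * x) ≠ c₂ (g * x))) by
      ext y
      simp only [Finset.mem_filter, Finset.mem_image, Finset.mem_smul_finset,
        smul_eq_mul]
      constructor
      · rintro ⟨⟨x, hx, rfl⟩, hy⟩; exact ⟨x, ⟨hx, hy⟩, rfl⟩
      · rintro ⟨x, ⟨hx, hy⟩, rfl⟩; exact ⟨⟨x, hx, rfl⟩, hy⟩]
    rw [Finset.card_image_of_injective _ (mul_right_injective g)]
  -- the symmetric-difference card equals the Følner term card
  have hsd : ∀ n, ((g • X n) \ X n).card = ((X n * ({g} : Finset G)⁻¹) \ X n).card := by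
    intro n
    rw [show (X n * ({g} : Finset G)⁻¹) \ X n
        = Finset.image (fun x => x⁻¹) ((g • X n) \ X n) by
      ext y
      simp only [Finset.mem_sdiff, Finset.mem_image, Finset.mem_mul,
        Finset.inv_singleton, Finset.mem_singleton, Finset.mem_smul_finset, smul_eq_mul]
      constructor
      · rintro ⟨⟨x, hx, z, rfl, rfl⟩, hy⟩
        refine ⟨g * x⁻¹, ⟨⟨x⁻¹, (hmem n x).mp hx, rfl⟩, fun hc => hy ?_⟩, by group⟩
        have h2 := (hmem n _).mp hc
        simpa using h2
      · rintro ⟨w, ⟨⟨x, hx, rfl⟩, hw⟩, rfl⟩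
        refine ⟨⟨x⁻¹, (hmem n x).mp hx, g⁻¹, rfl, by group⟩, fun hc => hw ?_⟩
        have h2 := (hmem n _).mp hc
        simpa using h2]
    rw [Finset.card_image_of_injective _ inv_injective]
  have hcard : ∀ n, (g • X n).card = (X n).card := fun n => Finset.card_smul_finset g (X n)
  set a : ℕ → ℝ := fun n =>
    (hamDist (X n : Set G) (fun h => c₁ (g * h)) (fun h => c₂ (g * h)) : ℝ) / (X n).card
  set b : ℕ → ℝ := fun n => (hamDist (X n : Set G) c₁ c₂ : ℝ) / (X n).card
  set e : ℕ → ℝ := fun n =>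
    (((X n * ({g} : Finset G)⁻¹) \ X n).card : ℝ) / (X n).card
  have he : Tendsto e atTop (nhds 0) := hX.2 {g}
  have ha0 : ∀ n, 0 ≤ a n := fun n => div_nonneg (Nat.cast_nonneg _) (Nat.cast_nonneg _)
  have hb0 : ∀ n, 0 ≤ b n := fun n => div_nonneg (Nat.cast_nonneg _) (Nat.cast_nonneg _)
  have hbound : ∀ (c₁ c₂ : G → Q) n,
      (hamDist (X n : Set G) c₁ c₂ : ℝ) / (X n).card ≤ 1 := by
    intro c₁ c₂ n
    rcases Nat.eq_zero_or_pos (X n).card with h | h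
    · simp [h]
    · rw [div_le_one (by exact_mod_cast h)]
      have h1 : hamDist (X n : Set G) c₁ c₂ ≤ (X n).card := by
        rw [hamDist_coe]; exact Finset.card_filter_le _ _
      exact_mod_cast h1
  have ha1 : ∀ n, a n ≤ 1 := fun n => hbound _ _ n
  have hb1 : ∀ n, b n ≤ 1 := fun n => hbound _ _ n
  -- nat-level inequalities
  have hnat1 : ∀ n, hamDist (X n : Set G) (fun h => c₁ (g * h)) (fun h => c₂ (g * h))
      ≤ hamDist (X n : Set G) c₁ c₂ + ((X n * ({g} : Finset G)⁻¹) \ X n).card := by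
    intro n
    rw [hham n, hamDist_coe, ← hsd n]
    exact filter_card_le (X n) (g • X n) _
  have hnat2 : ∀ n, hamDist (X n : Set G) c₁ c₂
      ≤ hamDist (X n : Set G) (fun h => c₁ (g * h)) (fun h => c₂ (g * h))
        + ((X n * ({g} : Finset G)⁻¹) \ X n).card := by
    intro n
    rw [hham n, hamDist_coe, ← hsd n, Finset.card_sdiff_comm (hcard n)]
    exact filter_card_le (g • X n) (X n) _
  have hdiv : ∀ (p q r : ℕ) (c : ℝ), 0 ≤ c → p ≤ q + r →
      (p : ℝ) / c ≤ (q : ℝ) / c + (r : ℝ) / c := by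
    intro p q r c hc hpqr
    rcases eq_or_lt_of_le hc with h | h
    · simp [← h]
    · rw [← add_div, div_le_div_iff_of_pos_right h]
      exact_mod_cast hpqr
  have hab : ∀ n, a n ≤ b n + e n := fun n =>
    hdiv _ _ _ _ (Nat.cast_nonneg _) (hnat1 n)
  have hba : ∀ n, b n ≤ a n + e n := fun n =>
    hdiv _ _ _ _ (Nat.cast_nonneg _) (hnat2 n)
  exact le_antisymm (limsup_le_of_le_add_tendsto ha0 hb0 hb1 hab he)
    (limsup_le_of_le_add_tendsto hb0 ha0 ha1 hba he)
end

section
/- Let A = ⟨Q, N, f⟩ be a cellular automaton over a finitely generated group G with finite generating set S, and suppose N ⊆ D_{r,S}. Then for all configurations c_1, c_2: d_{B,S}(F_A(c_1), F_A(c_2)) ≤ γ_S(r)^2 · d_{B,S}(c_1, c_2), where γ_S is the growth function. In particular F_A is Lipschitz for the Besicovitch pseudodistance with respect to word-metric balls, for any finitely generated group. -/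
open Filter

def wordBall {G : Type*} [Group G] (S : Set G) (n : ℕ) : Set G :=
  {g | ∃ l : List G, (∀ x ∈ l, x ∈ S ∨ x⁻¹ ∈ S) ∧ l.length ≤ n ∧ l.prod = g}

noncomputable def besDistBall {G Q : Type*} [Group G] (S : Set G) (c₁ c₂ : G → Q) : ℝ :=
  limsup (fun n => (hamDist (wordBall S n) c₁ c₂ : ℝ) / (wordBall S n).ncard) atTop

def caMap {G Q : Type*} [Group G] (N : Finset G) (f : (N → Q) → Q) :
    (G → Q) → G → Q :=
  fun c g => f (fun x => c (g * x.1))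

section Aux

variable {G : Type*} [Group G]

lemma one_mem_wordBall (S : Set G) (n : ℕ) : (1:G) ∈ wordBall S n :=
  ⟨[], by simp, by simp, by simp⟩

lemma mul_mem_wordBall {S : Set G} {m n : ℕ} {g h : G}
    (hg : g ∈ wordBall S m) (hh : h ∈ wordBall S n) : g * h ∈ wordBall S (m + n) := by
  obtain ⟨l1, ha, hb, hc⟩ := hg
  obtain ⟨l2, ha', hb', hc'⟩ := hh
  refine ⟨l1 ++ l2, ?_, by simpa using Nat.add_le_add hb hb', by simp [hc, hc']⟩
  intro x hx
  rcases List.mem_append.1 hx with h | h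
  exacts [ha x h, ha' x h]

lemma wordBall_finite {S : Set G} (hS : S.Finite) (n : ℕ) : (wordBall S n).Finite := by
  induction n with
  | zero =>
      apply Set.Finite.subset (Set.finite_singleton (1:G))
      rintro g ⟨l, -, h2, h3⟩
      rw [Nat.le_zero, List.length_eq_zero_iff] at h2
      simp [← h3, h2]
  | succ n ih =>
      have hsub : wordBall S (n+1) ⊆
          wordBall S n ∪ Set.image2 (· * ·) (S ∪ S⁻¹) (wordBall S n) := by
        rintro g ⟨l, h1, h2, h3⟩
        cases l with
        | nil => exact Or.inl ⟨[], by simp, by simp, h3⟩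
        | cons a t =>
            right
            refine ⟨a, ?_, t.prod,
              ⟨t, fun x hx => h1 x (List.mem_cons_of_mem a hx), ?_, rfl⟩, by simpa using h3⟩
            · rcases h1 a List.mem_cons_self with h | h
              · exact Or.inl h
              · exact Or.inr (Set.mem_inv.2 h)
            · simpa using Nat.lt_succ_iff.mp (Nat.lt_of_lt_of_le (Nat.lt_succ_self _)
                (by simpa using h2))
      exact Set.Finite.subset (ih.union (Set.Finite.image2 _ (hS.union hS.inv) ih)) hsub

lemma wordBall_subset_mul (S : Set G) (n r : ℕ) :
    wordBall S (n + r) ⊆ Set.image2 (· * ·) (wordBall S n) (wordBall S r) := by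
  rintro g ⟨l, h1, h2, h3⟩
  refine ⟨(l.take n).prod, ⟨l.take n, fun x hx => h1 x (List.mem_of_mem_take hx), by simp, rfl⟩,
    (l.drop n).prod, ⟨l.drop n, fun x hx => h1 x (List.mem_of_mem_drop hx), ?_, rfl⟩, ?_⟩
  · simp only [List.length_drop]; omega
  · show (l.take n).prod * (l.drop n).prod = g
    rw [← List.prod_append, List.take_append_drop]; exact h3

lemma ncard_prod_set {α β : Type*} (s : Set α) (t : Set β) :
    (s ×ˢ t).ncard = s.ncard * t.ncard := by
  rw [← Nat.card_coe_set_eq, ← Nat.card_coe_set_eq, ← Nat.card_coe_set_eq,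
    Nat.card_congr (Equiv.Set.prod s t), Nat.card_prod]

lemma wordBall_ncard_add_le {S : Set G} (hS : S.Finite) (n r : ℕ) :
    (wordBall S (n + r)).ncard ≤ (wordBall S n).ncard * (wordBall S r).ncard := by
  have h1 : (wordBall S (n + r)).ncard ≤
      (Set.image2 (· * ·) (wordBall S n) (wordBall S r)).ncard :=
    Set.ncard_le_ncard (wordBall_subset_mul S n r)
      (Set.Finite.image2 _ (wordBall_finite hS n) (wordBall_finite hS r))
  refine h1.trans ?_
  rw [← Set.image_prod]
  refine (Set.ncard_image_le ((wordBall_finite hS n).prod (wordBall_finite hS r))).trans ?_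
  rw [ncard_prod_set]

lemma hamDist_caMap_le {G Q : Type*} [Group G] {S : Set G} (hSfin : S.Finite)
    (N : Finset G) (hN : N.Nonempty) (f : (N → Q) → Q)
    (r : ℕ) (hNr : (N : Set G) ⊆ wordBall S r) (c₁ c₂ : G → Q) (n : ℕ) :
    hamDist (wordBall S n) (caMap N f c₁) (caMap N f c₂) ≤
      N.card * hamDist (wordBall S (n + r)) c₁ c₂ := by
  classical
  set A := {g ∈ wordBall S n | caMap N f c₁ g ≠ caMap N f c₂ g} with hA
  set D := {h ∈ wordBall S (n + r) | c₁ h ≠ c₂ h} with hD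
  have hDfin : D.Finite := (wordBall_finite hSfin (n + r)).subset (fun x hx => hx.1)
  have hex : ∀ g ∈ A, ∃ x : N, c₁ (g * x) ≠ c₂ (g * x) := by
    intro g hg
    by_contra hcon
    push_neg at hcon
    apply hg.2
    show f _ = f _
    congr 1
    funext x
    exact hcon x
  let x0 : N := ⟨hN.choose, hN.choose_spec⟩
  let φ : G → N := fun g => if hg : g ∈ A then (hex g hg).choose else x0
  have hφ : ∀ g ∈ A, c₁ (g * φ g) ≠ c₂ (g * φ g) := by
    intro g hg
    simp only [φ, dif_pos hg]
    exact (hex g hg).choose_spec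
  have hle : A.ncard ≤ ((N : Set G) ×ˢ D).ncard := by
    refine Set.ncard_le_ncard_of_injOn (fun g => ((φ g : G), g * φ g)) ?_ ?_
      (N.finite_toSet.prod hDfin)
    · intro g hg
      exact ⟨(φ g).2, mul_mem_wordBall hg.1 (hNr (φ g).2), hφ g hg⟩
    · intro g hg g' hg' h
      have h1 : (φ g : G) = φ g' := congrArg Prod.fst h
      have h2 : g * φ g = g' * φ g' := congrArg Prod.snd h
      rw [← h1] at h2
      exact mul_right_cancel h2
  calc hamDist (wordBall S n) (caMap N f c₁) (caMap N f c₂) = A.ncard := rfl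
    _ ≤ ((N : Set G) ×ˢ D).ncard := hle
    _ = N.card * hamDist (wordBall S (n + r)) c₁ c₂ := by
        rw [ncard_prod_set, Set.ncard_coe_finset]; rfl

end Aux

/-- If the neighborhood of a CA is contained in the ball of radius `r`, then its global
map is Lipschitz with constant `γ_S(r)²` for the Besicovitch pseudodistance with
respect to word-metric balls. -/
theorem ca_lipschitz_besicovitch_ball {G Q : Type*} [Group G] [Fintype Q]
    (hQ : 2 ≤ Fintype.card Q)
    (S : Set G) (hSfin : S.Finite) (hSgen : Subgroup.closure S = ⊤)
    (N : Finset G) (hN : N.Nonempty) (f : (N → Q) → Q)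
    (r : ℕ) (hNr : (N : Set G) ⊆ wordBall S r) (c₁ c₂ : G → Q) :
    besDistBall S (caMap N f c₁) (caMap N f c₂) ≤
      ((wordBall S r).ncard : ℝ) ^ 2 * besDistBall S c₁ c₂ := by
  classical
  set γ : ℕ → ℝ := fun n => ((wordBall S n).ncard : ℝ) with hγ
  have hγpos : ∀ n, 0 < γ n := by
    intro n
    have : 0 < (wordBall S n).ncard :=
      (Set.ncard_pos (wordBall_finite hSfin n)).2 ⟨1, one_mem_wordBall S n⟩
    simp only [hγ]
    exact_mod_cast this
  have hNcardle : (N.card : ℝ) ≤ γ r := by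
    have : N.card ≤ (wordBall S r).ncard := by
      rw [← Set.ncard_coe_finset]
      exact Set.ncard_le_ncard hNr (wordBall_finite hSfin r)
    simp only [hγ]
    exact_mod_cast this
  have hsub : ∀ n, γ (n + r) ≤ γ n * γ r := by
    intro n
    have := wordBall_ncard_add_le hSfin n r (S := S)
    simp only [hγ]
    exact_mod_cast this
  set a : ℕ → ℝ :=
    fun n => (hamDist (wordBall S n) (caMap N f c₁) (caMap N f c₂) : ℝ) / γ n with ha
  set b : ℕ → ℝ := fun n => (hamDist (wordBall S n) c₁ c₂ : ℝ) / γ n with hb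
  have hham_le : ∀ (d₁ d₂ : G → Q) n, (hamDist (wordBall S n) d₁ d₂ : ℝ) ≤ γ n := by
    intro d₁ d₂ n
    have : hamDist (wordBall S n) d₁ d₂ ≤ (wordBall S n).ncard :=
      Set.ncard_le_ncard (Set.sep_subset _ _) (wordBall_finite hSfin n)
    simp only [hγ]
    exact_mod_cast this
  have hb01 : ∀ n, 0 ≤ b n ∧ b n ≤ 1 := by
    intro n
    constructor
    · exact div_nonneg (by positivity) (hγpos n).le
    · rw [div_le_one (hγpos n)]; exact hham_le c₁ c₂ n
  have ha0 : ∀ n, 0 ≤ a n := fun n => div_nonneg (by positivity) (hγpos n).le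
  have key : ∀ n, a n ≤ γ r ^ 2 * b (n + r) := by
    intro n
    set H : ℝ := (hamDist (wordBall S (n + r)) c₁ c₂ : ℝ) with hH
    have hH0 : 0 ≤ H := by positivity
    have h1 : (hamDist (wordBall S n) (caMap N f c₁) (caMap N f c₂) : ℝ) ≤ γ r * H := by
      have := hamDist_caMap_le hSfin N hN f r hNr c₁ c₂ n
      calc (hamDist (wordBall S n) (caMap N f c₁) (caMap N f c₂) : ℝ)
          ≤ (N.card : ℝ) * H := by rw [hH]; exact_mod_cast this
        _ ≤ γ r * H := mul_le_mul_of_nonneg_right hNcardle hH0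
    have h2 : a n ≤ (γ r * H) / γ n :=
      div_le_div_of_nonneg_right h1 (hγpos n).le
    have h3 : H / γ n ≤ γ r * (H / γ (n + r)) := by
      rw [mul_div_assoc' (γ r) H (γ (n + r)), div_le_div_iff₀ (hγpos n) (hγpos (n + r))]
      calc H * γ (n + r) ≤ H * (γ n * γ r) := mul_le_mul_of_nonneg_left (hsub n) hH0
        _ = γ r * H * γ n := by ring
    calc a n ≤ (γ r * H) / γ n := h2
      _ = γ r * (H / γ n) := mul_div_assoc _ _ _
      _ ≤ γ r * (γ r * (H / γ (n + r))) :=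
          mul_le_mul_of_nonneg_left h3 (hγpos r).le
      _ = γ r ^ 2 * b (n + r) := by rw [hb]; ring
  -- limsup manipulations
  have hbddb : IsBoundedUnder (· ≤ ·) atTop (fun n => b (n + r)) :=
    isBoundedUnder_of ⟨1, fun n => (hb01 (n + r)).2⟩
  have hcobb : IsCoboundedUnder (· ≤ ·) atTop (fun n => b (n + r)) :=
    IsBoundedUnder.isCoboundedUnder_le (isBoundedUnder_of ⟨0, fun n => (hb01 (n + r)).1⟩)
  have hcoba : IsCoboundedUnder (· ≤ ·) atTop a :=
    IsBoundedUnder.isCoboundedUnder_le (isBoundedUnder_of ⟨0, ha0⟩)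
  have hbddrhs : IsBoundedUnder (· ≤ ·) atTop (fun n => γ r ^ 2 * b (n + r)) :=
    isBoundedUnder_of ⟨γ r ^ 2, fun n => by
      have := (hb01 (n + r)).2
      nlinarith [(hγpos r).le, (hb01 (n + r)).1]⟩
  have step1 : limsup a atTop ≤ limsup (fun n => γ r ^ 2 * b (n + r)) atTop :=
    limsup_le_limsup (Eventually.of_forall key) hcoba hbddrhs
  have step2 : limsup (fun n => γ r ^ 2 * b (n + r)) atTop
      = γ r ^ 2 * limsup (fun n => b (n + r)) atTop := by
    have hmono : Monotone (fun x : ℝ => γ r ^ 2 * x) :=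
      fun x y h => mul_le_mul_of_nonneg_left h (by positivity)
    exact (hmono.map_limsup_of_continuousAt (fun n => b (n + r))
      ((continuous_const.mul continuous_id).continuousAt) hbddb hcobb).symm
  have step3 : limsup (fun n => b (n + r)) atTop = limsup b atTop := limsup_nat_add b r
  show limsup a atTop ≤ γ r ^ 2 * limsup b atTop
  rw [← step3, ← step2]
  exact step1
end
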